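/- If in addition ∑_{k=1}^∞ α_k² < ∞, then the weighted disagreement series is summable: ∑_{k=1}^∞ α_k max_{j=1,…,n} ‖δ^j_k‖ < ∞. -/

import Mathlib

private lemma grad_ineq {E : Type*} [NormedAddCommGroup E] [InnerProductSpace ℝ E]
    [CompleteSpace E]
    {f : E → ℝ} {G : E} {x : E} (hf : ConvexOn ℝ Set.univ f) (hG : HasGradientAt f G x)
    (y : E) : (inner ℝ G (y - x) : ℝ) ≤ f y - f x := by
  set φ : ℝ → ℝ := fun t => f (t • (y - x) + x) with hφ
  have hφconv : ConvexOn ℝ Set.univ φ := by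
    have h := hf.comp_affineMap (AffineMap.lineMap x y)
    rw [Set.preimage_univ] at h
    exact h
  have h1 : HasDerivAt (fun t : ℝ => t • (y - x) + x) (y - x) 0 := by
    have := ((hasDerivAt_id (0:ℝ)).smul_const (y - x)).add_const x
    simpa using this
  have hd : HasDerivAt φ (inner ℝ G (y - x) : ℝ) 0 := by
    have hG' : HasFDerivAt f ((InnerProductSpace.toDual ℝ E) G) ((0:ℝ) • (y - x) + x) := by
      simpa using hG.hasFDerivAt
    have := hG'.comp_hasDerivAt (0:ℝ) h1
    have h2 : HasDerivAt (f ∘ fun t : ℝ => t • (y - x) + x) (inner ℝ G (y - x)) 0 := by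
      simpa [InnerProductSpace.toDual_apply_apply] using this
    exact h2
  have key := hφconv.le_slope_of_hasDerivAt (Set.mem_univ (0:ℝ)) (Set.mem_univ (1:ℝ))
    one_pos hd
  rw [slope_def_field] at key
  simpa [hφ] using key

private lemma geo_tail_le {β : ℝ} (hβ0 : 0 ≤ β) (hβ1 : β < 1) (m : ℕ) :
    ∑ i ∈ Finset.range m, β ^ (i + 1) ≤ β * (1 - β)⁻¹ := by
  have h : ∑ i ∈ Finset.range m, β ^ (i + 1) = β * ∑ i ∈ Finset.range m, β ^ i := by
    rw [Finset.mul_sum]; exact Finset.sum_congr rfl (fun i _ => by ring)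
  rw [h]
  have h2 : ∑ i ∈ Finset.range m, β ^ i ≤ (1 - β)⁻¹ := by
    have := Summable.sum_le_tsum (Finset.range m) (fun i _ => pow_nonneg hβ0 i)
      (summable_geometric_of_lt_one hβ0 hβ1)
    rwa [tsum_geometric_of_lt_one hβ0 hβ1] at this
  exact mul_le_mul_of_nonneg_left h2 hβ0

private lemma geo_rev_le {β : ℝ} (hβ0 : 0 ≤ β) (hβ1 : β < 1) (k : ℕ) :
    ∑ s ∈ Finset.Ico 1 k, β ^ (k - s) ≤ β * (1 - β)⁻¹ := by
  rw [Finset.sum_Ico_eq_sum_range]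
  have h : ∀ i ∈ Finset.range (k - 1), β ^ (k - (1 + i)) = β ^ ((k-1) - 1 - i + 1) := by
    intro i hi
    rw [Finset.mem_range] at hi
    congr 1
    omega
  rw [Finset.sum_congr rfl h, Finset.sum_range_reflect (fun i => β ^ (i + 1)) (k-1)]
  exact geo_tail_le hβ0 hβ1 _

private lemma geo_fwd_le {β : ℝ} (hβ0 : 0 ≤ β) (hβ1 : β < 1) (s K : ℕ) :
    ∑ k ∈ Finset.Ico (s+1) K, β ^ (k - s) ≤ β * (1 - β)⁻¹ := by
  rw [Finset.sum_Ico_eq_sum_range]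
  have h : ∀ i ∈ Finset.range (K - (s+1)), β ^ (s + 1 + i - s) = β ^ (i + 1) := by
    intro i _
    congr 1
    omega
  rw [Finset.sum_congr rfl h]
  exact geo_tail_le hβ0 hβ1 _

private lemma conv_swap_le {β : ℝ} (hβ0 : 0 ≤ β) (hβ1 : β < 1) (a : ℕ → ℝ)
    (ha : ∀ s, 0 ≤ a s) (A : ℝ) (hA : ∀ K, ∑ s ∈ Finset.Ico 1 K, a s ≤ A) (K : ℕ) :
    ∑ k ∈ Finset.Ico 1 K, ∑ s ∈ Finset.Ico 1 k, β ^ (k - s) * a s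
      ≤ β * (1 - β)⁻¹ * A := by
  have hstep : ∑ k ∈ Finset.Ico 1 K, ∑ s ∈ Finset.Ico 1 k, β ^ (k - s) * a s
      = ∑ s ∈ Finset.Ico 1 K, ∑ k ∈ Finset.Ico 1 K,
          (if s < k then β ^ (k - s) * a s else 0) := by
    rw [Finset.sum_comm]
    refine Finset.sum_congr rfl ?_
    intro k hk
    rw [Finset.mem_Ico] at hk
    have hfil : (Finset.Ico 1 K).filter (fun s => s < k) = Finset.Ico 1 k := by
      ext t
      simp only [Finset.mem_Ico, Finset.mem_filter]
      omega
    rw [← Finset.sum_filter, hfil]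
  rw [hstep]
  have hnn : 0 ≤ β * (1 - β)⁻¹ := by
    have h1 : 0 ≤ (1 - β)⁻¹ := inv_nonneg.mpr (by linarith)
    positivity
  calc ∑ s ∈ Finset.Ico 1 K, ∑ k ∈ Finset.Ico 1 K, (if s < k then β ^ (k - s) * a s else 0)
      ≤ ∑ s ∈ Finset.Ico 1 K, β * (1 - β)⁻¹ * a s := by
        refine Finset.sum_le_sum ?_
        intro s _
        have hfil2 : (Finset.Ico 1 K).filter (fun k => s < k) = Finset.Ico (s+1) K := by
          ext t
          simp only [Finset.mem_Ico, Finset.mem_filter]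
          omega
        rw [← Finset.sum_filter, hfil2, ← Finset.sum_mul]
        exact mul_le_mul_of_nonneg_right (geo_fwd_le hβ0 hβ1 s K) (ha s)
    _ = β * (1 - β)⁻¹ * ∑ s ∈ Finset.Ico 1 K, a s := by rw [Finset.mul_sum]
    _ ≤ β * (1 - β)⁻¹ * A := mul_le_mul_of_nonneg_left (hA K) hnn

private lemma mat_smul_swap {n : ℕ} {E : Type*} [AddCommMonoid E] [Module ℝ E]
    (b : Fin n → ℝ) (c : Fin n → Fin n → ℝ) (y : Fin n → E) :
    ∑ i, b i • ∑ r, c i r • y r = ∑ r, (∑ i, b i * c i r) • y r := by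
  simp_rw [Finset.smul_sum, smul_smul]
  rw [Finset.sum_comm]
  simp_rw [Finset.sum_smul]
open Pointwise in
set_option maxHeartbeats 1000000 in
/-- Summability of the weighted disagreement series when ∑ α_k² < ∞. -/
theorem stmt_17
    (n D : ℕ) (hn : 1 ≤ n) (hD : 1 ≤ D)
    (L N Δ : ℝ) (hL : 0 ≤ L) (hN : 0 ≤ N) (hΔ : 0 ≤ Δ)
    (X : Set (EuclideanSpace ℝ (Fin D)))
    (hXne : X.Nonempty) (hXcompact : IsCompact X) (hXconvex : Convex ℝ X)
    (P : EuclideanSpace ℝ (Fin D) → EuclideanSpace ℝ (Fin D))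
    (hP : ∀ z, P z ∈ X ∧ ∀ y ∈ X, ‖z - P z‖ ≤ ‖z - y‖)
    (f : Fin n → EuclideanSpace ℝ (Fin D) → ℝ)
    (g : Fin n → EuclideanSpace ℝ (Fin D) → EuclideanSpace ℝ (Fin D))
    (hfconv : ∀ j, ConvexOn ℝ Set.univ (f j))
    (hfgrad : ∀ j z, HasGradientAt (f j) (g j z) z)
    (hgbound : ∀ j, ∀ z ∈ X, ‖g j z‖ ≤ L)
    (hglip : ∀ j, ∀ z ∈ X, ∀ w ∈ X, ‖g j z - g j w‖ ≤ N * ‖z - w‖)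
    (α : ℕ → ℝ) (hαpos : ∀ k, 1 ≤ k → 0 < α k)
    (hαmono : ∀ k, 1 ≤ k → α (k + 1) ≤ α k)
    (B : ℕ → Matrix (Fin n) (Fin n) ℝ)
    (hBnn : ∀ k i j, 1 ≤ k → 0 ≤ B k i j)
    (hBrow : ∀ k i, 1 ≤ k → ∑ j, B k i j = 1)
    (hBcol : ∀ k j, 1 ≤ k → ∑ i, B k i j = 1)
    (Φ : ℕ → ℕ → Matrix (Fin n) (Fin n) ℝ)
    (hΦdiag : ∀ s, 1 ≤ s → Φ s s = B s)
    (hΦrec : ∀ k s, 1 ≤ s → s ≤ k → Φ (k + 1) s = B (k + 1) * Φ k s)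
    (θ β : ℝ) (hθ : 0 < θ) (hβ0 : 0 < β) (hβ1 : β < 1)
    (hΦbound : ∀ k s i j, 1 ≤ s → s ≤ k →
      |Φ k s i j - 1 / n| ≤ θ * β ^ (k - s + 1))
    (e : ℕ → Fin n → EuclideanSpace ℝ (Fin D))
    (hebound : ∀ k j, 1 ≤ k → ‖e k j‖ ≤ Δ)
    (hesum : ∀ k, 1 ≤ k → ∑ j, e k j = 0)
    (x : ℕ → Fin n → EuclideanSpace ℝ (Fin D))
    (hx1 : ∀ j, x 1 j ∈ X)
    (hupdate : ∀ k j, 1 ≤ k →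
      x (k + 1) j = P ((∑ i, B k j i • x k i) -
        α k • (g j ((∑ i, B k j i • x k i) + α k • e k j) - e k j)))
    (hαsq : Summable fun k => α (k + 1) ^ 2)
    : Summable fun k =>
        α (k + 1) * ⨆ j, ‖x (k + 1) j - (n : ℝ)⁻¹ • ∑ i, x (k + 1) i‖ := by
  classical
  haveI : Nonempty (Fin n) := ⟨⟨0, hn⟩⟩
  have hn0 : (0:ℝ) < (n:ℝ) := by exact_mod_cast hn
  have hα1 : 0 < α 1 := hαpos 1 le_rfl
  have hαle1 : ∀ k, 1 ≤ k → α k ≤ α 1 := by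
    intro k hk
    induction k with
    | zero => omega
    | succ m ih =>
      rcases Nat.lt_or_ge m 1 with h | h
      · have : m = 0 := by omega
        subst this; exact le_rfl
      · exact le_trans (hαmono m h) (ih h)
  -- iterates stay in X
  have hxX : ∀ k, 1 ≤ k → ∀ j, x k j ∈ X := by
    intro k hk
    induction k with
    | zero => omega
    | succ m _ =>
      rcases Nat.lt_or_ge m 1 with h | h
      · have : m = 0 := by omega
        subst this; exact hx1
      · intro j
        rw [hupdate m j h]
        exact (hP _).1
  have hvX : ∀ k, 1 ≤ k → ∀ j, (∑ i, B k j i • x k i) ∈ X := fun k hk j =>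
    hXconvex.sum_mem (fun i _ => hBnn k j i hk) (hBrow k j hk) (fun i _ => hxX k hk i)
  -- bound on X
  obtain ⟨R0, hR0⟩ := hXcompact.exists_bound_of_continuousOn continuousOn_id
  set R := max R0 0 with hRdef
  have hRX : ∀ z ∈ X, ‖z‖ ≤ R := fun z hz => le_trans (hR0 z hz) (le_max_left _ _)
  have hR0' : (0:ℝ) ≤ R := le_max_right _ _
  -- continuity of f
  have hfc : ∀ j, Continuous (f j) :=
    fun j => Differentiable.continuous (fun z => (hfgrad j z).hasFDerivAt.differentiableAt)
  -- compact superset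
  set r : ℝ := α 1 * Δ with hrdef
  have hrpos : (0:ℝ) ≤ r := mul_nonneg hα1.le hΔ
  set K : Set (EuclideanSpace ℝ (Fin D)) :=
    X + Metric.closedBall (0 : EuclideanSpace ℝ (Fin D)) (r + 1) with hKdef
  have hKcomp : IsCompact K := hXcompact.add (isCompact_closedBall _ _)
  have hKmem : ∀ y ∈ X, ∀ w : EuclideanSpace ℝ (Fin D), ‖w‖ ≤ r + 1 → y + w ∈ K := by
    intro y hy w hw
    exact Set.add_mem_add hy (mem_closedBall_zero_iff.mpr hw)
  have hMj : ∀ j : Fin n, ∃ M, ∀ z ∈ K, ‖f j z‖ ≤ M := fun j =>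
    hKcomp.exists_bound_of_continuousOn (hfc j).continuousOn
  choose M hM using hMj
  set Mx := Finset.univ.sup' Finset.univ_nonempty M with hMxdef
  have hMxb : ∀ j, ∀ z ∈ K, |f j z| ≤ Mx := fun j z hz =>
    le_trans (by rw [← Real.norm_eq_abs]; exact hM j z hz) (Finset.le_sup' M (Finset.mem_univ j))
  have hMx0 : (0:ℝ) ≤ Mx := by
    obtain ⟨z0, hz0⟩ := hXne
    have hz0K : z0 ∈ K := by
      have := hKmem z0 hz0 0 (by simpa using by linarith : ‖(0:EuclideanSpace ℝ (Fin D))‖ ≤ r + 1)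
      simpa using this
    exact le_trans (abs_nonneg _) (hMxb ⟨0, hn⟩ z0 hz0K)
  -- gradient bound near X
  have hGb : ∀ j, ∀ y ∈ X, ∀ w : EuclideanSpace ℝ (Fin D), ‖w‖ ≤ r →
      ‖g j (y + w)‖ ≤ 2 * Mx := by
    intro j y hy w hw
    set z := y + w with hzdef
    have hzK : z ∈ K := hKmem y hy w (by linarith)
    by_cases h0 : g j z = 0
    · rw [h0]; simpa using by linarith
    · set u := ‖g j z‖⁻¹ • g j z with hudef
      have hgn : (0:ℝ) < ‖g j z‖ := norm_pos_iff.mpr h0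
      have hnu : ‖u‖ = 1 := by
        rw [hudef, norm_smul, norm_inv, norm_norm]
        field_simp
      have hzuK : z + u ∈ K := by
        rw [hzdef, add_assoc]
        refine hKmem y hy (w + u) ?_
        calc ‖w + u‖ ≤ ‖w‖ + ‖u‖ := norm_add_le _ _
          _ ≤ r + 1 := by rw [hnu]; linarith
      have key := grad_ineq (hfconv j) (hfgrad j z) (z + u)
      rw [add_sub_cancel_left] at key
      have hinner : (inner ℝ (g j z) u : ℝ) = ‖g j z‖ := by
        rw [hudef, real_inner_smul_right, real_inner_self_eq_norm_sq]
        rw [pow_two]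
        field_simp
      rw [hinner] at key
      have ha1 := hMxb j _ hzuK
      have ha2 := hMxb j z hzK
      have hb1 := le_abs_self (f j (z + u))
      have hb2 := neg_abs_le (f j z)
      linarith
  -- the projection steps
  set p : ℕ → Fin n → EuclideanSpace ℝ (Fin D) :=
    fun k j => x (k+1) j - ∑ i, B k j i • x k i with hpdef
  set C : ℝ := 2 * (2 * Mx + Δ) with hCdef
  have hC0 : (0:ℝ) ≤ C := by rw [hCdef]; linarith
  have hxstep : ∀ k j, x (k+1) j = (∑ i, B k j i • x k i) + p k j := by
    intro k j
    simp only [hpdef]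
    abel
  have hpbound : ∀ k, 1 ≤ k → ∀ j, ‖p k j‖ ≤ C * α k := by
    intro k hk j
    have hv : (∑ i, B k j i • x k i) ∈ X := hvX k hk j
    set v := ∑ i, B k j i • x k i with hvdef
    set z := v - α k • (g j (v + α k • e k j) - e k j) with hzdef
    have hx' : x (k+1) j = P z := hupdate k j hk
    have hαk : 0 < α k := hαpos k hk
    have hzv : ‖z - v‖ = α k * ‖g j (v + α k • e k j) - e k j‖ := by
      rw [hzdef, sub_sub_cancel_left, norm_neg, norm_smul, Real.norm_eq_abs, abs_of_pos hαk]
    have hgb : ‖g j (v + α k • e k j)‖ ≤ 2 * Mx := by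
      refine hGb j v hv (α k • e k j) ?_
      rw [norm_smul, Real.norm_eq_abs, abs_of_pos hαk, hrdef]
      calc α k * ‖e k j‖ ≤ α k * Δ := mul_le_mul_of_nonneg_left (hebound k j hk) hαk.le
        _ ≤ α 1 * Δ := mul_le_mul_of_nonneg_right (hαle1 k hk) hΔ
    have hge : ‖g j (v + α k • e k j) - e k j‖ ≤ 2 * Mx + Δ :=
      le_trans (norm_sub_le _ _) (add_le_add hgb (hebound k j hk))
    have hp1 : p k j = P z - v := by rw [hpdef]; simp only []; rw [← hx']
    rw [hp1]
    have htri : ‖P z - v‖ ≤ ‖P z - z‖ + ‖z - v‖ := by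
      have := norm_add_le (P z - z) (z - v)
      simpa using this
    have hproj : ‖z - P z‖ ≤ ‖z - v‖ := (hP z).2 v hv
    rw [norm_sub_rev (P z) z] at htri
    have : ‖P z - v‖ ≤ 2 * (α k * ‖g j (v + α k • e k j) - e k j‖) := by
      rw [← hzv] at *
      linarith
    calc ‖P z - v‖ ≤ 2 * (α k * ‖g j (v + α k • e k j) - e k j‖) := this
      _ ≤ 2 * (α k * (2 * Mx + Δ)) := by
          have := mul_le_mul_of_nonneg_left hge hαk.le
          linarith
      _ = C * α k := by rw [hCdef]; ring
    -- unrolled recursion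
  have hunroll : ∀ k, 1 ≤ k → ∀ j, x (k+1) j
      = (∑ i, Φ k 1 j i • x 1 i)
        + (∑ s ∈ Finset.Ico 1 k, ∑ i, Φ k (s+1) j i • p s i) + p k j := by
    intro k hk
    induction k with
    | zero => omega
    | succ m ih =>
      intro j
      rcases Nat.lt_or_ge m 1 with hm | hm
      · have hm0 : m = 0 := by omega
        subst hm0
        rw [hxstep 1 j, hΦdiag 1 le_rfl]
        simp
      · rw [hxstep (m+1) j]
        have hp1 : ∑ i, B (m+1) j i • (∑ t, Φ m 1 i t • x 1 t)
            = ∑ i, Φ (m+1) 1 j i • x 1 i := by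
          rw [mat_smul_swap (B (m+1) j) (Φ m 1) (x 1)]
          refine Finset.sum_congr rfl fun t _ => ?_
          congr 1
          rw [hΦrec m 1 le_rfl hm, Matrix.mul_apply]
        have hp2 : ∑ i, B (m+1) j i • (∑ s ∈ Finset.Ico 1 m, ∑ t, Φ m (s+1) i t • p s t)
            = ∑ s ∈ Finset.Ico 1 m, ∑ i, Φ (m+1) (s+1) j i • p s i := by
          have hsw : ∑ i, B (m+1) j i •
              (∑ s ∈ Finset.Ico 1 m, ∑ t, Φ m (s+1) i t • p s t)
              = ∑ s ∈ Finset.Ico 1 m, ∑ i, B (m+1) j i •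
                (∑ t, Φ m (s+1) i t • p s t) := by
            simp_rw [Finset.smul_sum]
            exact Finset.sum_comm
          rw [hsw]
          refine Finset.sum_congr rfl fun s hs => ?_
          rw [Finset.mem_Ico] at hs
          rw [mat_smul_swap (B (m+1) j) (Φ m (s+1)) (p s)]
          refine Finset.sum_congr rfl fun t _ => ?_
          congr 1
          rw [hΦrec m (s+1) (by omega) (by omega : s+1 ≤ m), Matrix.mul_apply]
        have hp3 : ∑ i, B (m+1) j i • p m i = ∑ i, Φ (m+1) (m+1) j i • p m i := by
          rw [hΦdiag (m+1) (by omega)]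
        have hexp : (∑ i, B (m+1) j i • x (m+1) i)
            = (∑ i, Φ (m+1) 1 j i • x 1 i)
              + ((∑ s ∈ Finset.Ico 1 m, ∑ i, Φ (m+1) (s+1) j i • p s i)
                + (∑ i, Φ (m+1) (m+1) j i • p m i)) := by
          calc ∑ i, B (m+1) j i • x (m+1) i
              = ∑ i, (B (m+1) j i • (∑ t, Φ m 1 i t • x 1 t)
                + (B (m+1) j i • (∑ s ∈ Finset.Ico 1 m, ∑ t, Φ m (s+1) i t • p s t)
                + B (m+1) j i • p m i)) := by
                refine Finset.sum_congr rfl fun i _ => ?_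
                rw [ih hm i, smul_add, smul_add, add_assoc]
            _ = (∑ i, B (m+1) j i • (∑ t, Φ m 1 i t • x 1 t))
                + ((∑ i, B (m+1) j i • (∑ s ∈ Finset.Ico 1 m, ∑ t, Φ m (s+1) i t • p s t))
                + (∑ i, B (m+1) j i • p m i)) := by
                rw [Finset.sum_add_distrib, Finset.sum_add_distrib]
            _ = _ := by rw [hp1, hp2, hp3]
        rw [hexp, Finset.sum_Ico_succ_top hm]
  -- averages
  have hbar1 : ∀ k, 1 ≤ k → (∑ i, x (k+1) i) = (∑ i, x k i) + ∑ i, p k i := by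
    intro k hk
    calc ∑ j, x (k+1) j = ∑ j, ((∑ i, B k j i • x k i) + p k j) :=
        Finset.sum_congr rfl fun j _ => hxstep k j
      _ = (∑ j, ∑ i, B k j i • x k i) + ∑ j, p k j := Finset.sum_add_distrib
      _ = (∑ i, x k i) + ∑ j, p k j := by
          congr 1
          rw [Finset.sum_comm]
          refine Finset.sum_congr rfl fun i _ => ?_
          rw [← Finset.sum_smul, hBcol k i hk, one_smul]
  have hbar : ∀ k, 1 ≤ k →
      (∑ i, x (k+1) i) = (∑ i, x 1 i) + ∑ s ∈ Finset.Ico 1 (k+1), ∑ i, p s i := by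
    intro k hk
    induction k with
    | zero => omega
    | succ m ih =>
      rcases Nat.lt_or_ge m 1 with hm | hm
      · have hm0 : m = 0 := by omega
        subst hm0
        rw [hbar1 1 le_rfl]
        rw [Finset.sum_Ico_succ_top le_rfl]
        simp
      · rw [hbar1 (m+1) (by omega), ih hm, Finset.sum_Ico_succ_top (by omega : 1 ≤ m+1)]
        abel
    -- disagreement bound
  have hdelta : ∀ k, 1 ≤ k → ∀ j,
      ‖x (k+1) j - (n:ℝ)⁻¹ • ∑ i, x (k+1) i‖
        ≤ (n:ℝ) * θ * R * β ^ k
          + (∑ s ∈ Finset.Ico 1 k, (n:ℝ) * θ * C * (β ^ (k-s) * α s))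
          + 2 * (C * α k) := by
    intro k hk j
    have hsplit : x (k+1) j - (n:ℝ)⁻¹ • ∑ i, x (k+1) i
        = (∑ i, (Φ k 1 j i - (n:ℝ)⁻¹) • x 1 i)
          + (∑ s ∈ Finset.Ico 1 k, ∑ i, (Φ k (s+1) j i - (n:ℝ)⁻¹) • p s i)
          + (p k j - (n:ℝ)⁻¹ • ∑ i, p k i) := by
      have e1 : ∑ i, (Φ k 1 j i - (n:ℝ)⁻¹) • x 1 i
          = (∑ i, Φ k 1 j i • x 1 i) - (n:ℝ)⁻¹ • ∑ i, x 1 i := by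
        rw [Finset.smul_sum, ← Finset.sum_sub_distrib]
        exact Finset.sum_congr rfl fun i _ => by rw [sub_smul]
      have e2 : ∑ s ∈ Finset.Ico 1 k, ∑ i, (Φ k (s+1) j i - (n:ℝ)⁻¹) • p s i
          = (∑ s ∈ Finset.Ico 1 k, ∑ i, Φ k (s+1) j i • p s i)
            - ∑ s ∈ Finset.Ico 1 k, (n:ℝ)⁻¹ • ∑ i, p s i := by
        rw [← Finset.sum_sub_distrib]
        refine Finset.sum_congr rfl fun s _ => ?_
        rw [Finset.smul_sum, ← Finset.sum_sub_distrib]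
        exact Finset.sum_congr rfl fun i _ => by rw [sub_smul]
      have e3 : (n:ℝ)⁻¹ • ∑ s ∈ Finset.Ico 1 k, ∑ i, p s i
          = ∑ s ∈ Finset.Ico 1 k, (n:ℝ)⁻¹ • ∑ i, p s i := Finset.smul_sum
      rw [e1, e2, hunroll k hk j, hbar k hk, Finset.sum_Ico_succ_top hk]
      rw [smul_add, smul_add, e3]
      abel
    rw [hsplit]
    have hβk : (0:ℝ) ≤ θ * β ^ k := by positivity
    have hb1 : ‖∑ i, (Φ k 1 j i - (n:ℝ)⁻¹) • x 1 i‖ ≤ (n:ℝ) * θ * R * β ^ k := by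
      calc ‖∑ i, (Φ k 1 j i - (n:ℝ)⁻¹) • x 1 i‖
          ≤ ∑ i, ‖(Φ k 1 j i - (n:ℝ)⁻¹) • x 1 i‖ := norm_sum_le _ _
        _ ≤ ∑ _i : Fin n, θ * β ^ k * R := by
            refine Finset.sum_le_sum fun i _ => ?_
            rw [norm_smul, Real.norm_eq_abs]
            have h1 := hΦbound k 1 j i le_rfl hk
            rw [show k - 1 + 1 = k from by omega, one_div] at h1
            exact mul_le_mul h1 (hRX _ (hx1 i)) (norm_nonneg _) hβk
        _ = (n:ℝ) * θ * R * β ^ k := by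
            rw [Finset.sum_const, Finset.card_univ, Fintype.card_fin, nsmul_eq_mul]
            ring
    have hb2 : ‖∑ s ∈ Finset.Ico 1 k, ∑ i, (Φ k (s+1) j i - (n:ℝ)⁻¹) • p s i‖
        ≤ ∑ s ∈ Finset.Ico 1 k, (n:ℝ) * θ * C * (β ^ (k-s) * α s) := by
      calc ‖∑ s ∈ Finset.Ico 1 k, ∑ i, (Φ k (s+1) j i - (n:ℝ)⁻¹) • p s i‖
          ≤ ∑ s ∈ Finset.Ico 1 k, ‖∑ i, (Φ k (s+1) j i - (n:ℝ)⁻¹) • p s i‖ :=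
            norm_sum_le _ _
        _ ≤ ∑ s ∈ Finset.Ico 1 k, (n:ℝ) * θ * C * (β ^ (k-s) * α s) := by
            refine Finset.sum_le_sum fun s hs => ?_
            rw [Finset.mem_Ico] at hs
            calc ‖∑ i, (Φ k (s+1) j i - (n:ℝ)⁻¹) • p s i‖
                ≤ ∑ i, ‖(Φ k (s+1) j i - (n:ℝ)⁻¹) • p s i‖ := norm_sum_le _ _
              _ ≤ ∑ _i : Fin n, θ * β ^ (k-s) * (C * α s) := by
                  refine Finset.sum_le_sum fun i _ => ?_
                  rw [norm_smul, Real.norm_eq_abs]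
                  have h1 := hΦbound k (s+1) j i (by omega) (by omega : s+1 ≤ k)
                  rw [show k - (s+1) + 1 = k - s from by omega, one_div] at h1
                  have h2 := hpbound s (by omega : 1 ≤ s) i
                  exact mul_le_mul h1 h2 (norm_nonneg _) (by positivity)
              _ = (n:ℝ) * θ * C * (β ^ (k-s) * α s) := by
                  rw [Finset.sum_const, Finset.card_univ, Fintype.card_fin, nsmul_eq_mul]
                  ring
    have hb3 : ‖p k j - (n:ℝ)⁻¹ • ∑ i, p k i‖ ≤ 2 * (C * α k) := by
      have hsum : ‖∑ i, p k i‖ ≤ (n:ℝ) * (C * α k) := by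
        calc ‖∑ i, p k i‖ ≤ ∑ i, ‖p k i‖ := norm_sum_le _ _
          _ ≤ ∑ _i : Fin n, C * α k := Finset.sum_le_sum fun i _ => hpbound k hk i
          _ = (n:ℝ) * (C * α k) := by
              rw [Finset.sum_const, Finset.card_univ, Fintype.card_fin, nsmul_eq_mul]
      have h1 : ‖(n:ℝ)⁻¹ • ∑ i, p k i‖ ≤ C * α k := by
        rw [norm_smul, Real.norm_eq_abs, abs_of_nonneg (by positivity : (0:ℝ) ≤ (n:ℝ)⁻¹)]
        have h2 : (n:ℝ)⁻¹ * ‖∑ i, p k i‖ ≤ (n:ℝ)⁻¹ * ((n:ℝ) * (C * α k)) :=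
          mul_le_mul_of_nonneg_left hsum (by positivity)
        have h3 : (n:ℝ)⁻¹ * ((n:ℝ) * (C * α k)) = C * α k := by field_simp
        linarith
      calc ‖p k j - (n:ℝ)⁻¹ • ∑ i, p k i‖
          ≤ ‖p k j‖ + ‖(n:ℝ)⁻¹ • ∑ i, p k i‖ := norm_sub_le _ _
        _ ≤ 2 * (C * α k) := by
            have := hpbound k hk j
            linarith
    calc ‖(∑ i, (Φ k 1 j i - (n:ℝ)⁻¹) • x 1 i)
          + (∑ s ∈ Finset.Ico 1 k, ∑ i, (Φ k (s+1) j i - (n:ℝ)⁻¹) • p s i)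
          + (p k j - (n:ℝ)⁻¹ • ∑ i, p k i)‖
        ≤ ‖∑ i, (Φ k 1 j i - (n:ℝ)⁻¹) • x 1 i‖
          + ‖∑ s ∈ Finset.Ico 1 k, ∑ i, (Φ k (s+1) j i - (n:ℝ)⁻¹) • p s i‖
          + ‖p k j - (n:ℝ)⁻¹ • ∑ i, p k i‖ := norm_add₃_le
      _ ≤ _ := by
          refine add_le_add (add_le_add hb1 hb2) hb3
    -- partial sum bounds for α²
  set A : ℝ := ∑' k, α (k+1)^2 with hAdef
  have hA0 : (0:ℝ) ≤ A := tsum_nonneg fun k => sq_nonneg _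
  have hApart1 : ∀ K : ℕ, ∑ k ∈ Finset.Ico 1 K, α k ^ 2 ≤ A := by
    intro K
    rw [Finset.sum_Ico_eq_sum_range]
    have hcg : ∀ i ∈ Finset.range (K-1), α (1+i)^2 = α (i+1)^2 :=
      fun i _ => by rw [Nat.add_comm]
    rw [Finset.sum_congr rfl hcg]
    exact Summable.sum_le_tsum _ (fun i _ => sq_nonneg _) hαsq
  have hApart2 : ∀ K : ℕ, ∑ k ∈ Finset.Ico 1 K, α (k+1) ^ 2 ≤ A := by
    intro K
    refine le_trans (Finset.sum_le_sum_of_subset_of_nonneg ?_ fun i _ _ => sq_nonneg _)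
      (Summable.sum_le_tsum (Finset.range K) (fun i _ => sq_nonneg _) hαsq)
    intro t ht
    rw [Finset.mem_Ico] at ht
    rw [Finset.mem_range]
    omega
  have hβ2 : β * β < 1 := by nlinarith
  have hβ20 : (0:ℝ) ≤ β * β := by positivity
  have hgeo2 : ∀ K : ℕ, ∑ k ∈ Finset.Ico 1 K, (β*β) ^ k ≤ (1 - β*β)⁻¹ := by
    intro K
    refine le_trans (Finset.sum_le_sum_of_subset_of_nonneg (t := Finset.range K) ?_ ?_) ?_
    · intro t ht
      rw [Finset.mem_Ico] at ht
      rw [Finset.mem_range]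
      omega
    · intro i _ _
      positivity
    · have h := Summable.sum_le_tsum (Finset.range K) (fun i _ => (by positivity : (0:ℝ) ≤ (β*β)^i))
        (summable_geometric_of_lt_one hβ20 hβ2)
      rwa [tsum_geometric_of_lt_one hβ20 hβ2] at h
  -- nonnegativity facts
  have hβinv : (0:ℝ) ≤ β * (1-β)⁻¹ := by
    have : (0:ℝ) ≤ (1-β)⁻¹ := inv_nonneg.mpr (by linarith)
    positivity
  have h1β2 : (0:ℝ) ≤ (1-β*β)⁻¹ := inv_nonneg.mpr (by nlinarith)
  have hnθR0 : (0:ℝ) ≤ (n:ℝ)*θ*R := by positivity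
  have hnθC0 : (0:ℝ) ≤ (n:ℝ)*θ*C := by positivity
  -- sup bounds
  have hsup : ∀ k, 1 ≤ k → (⨆ j, ‖x (k+1) j - (n:ℝ)⁻¹ • ∑ i, x (k+1) i‖)
      ≤ (n:ℝ) * θ * R * β ^ k
        + (∑ s ∈ Finset.Ico 1 k, (n:ℝ) * θ * C * (β ^ (k-s) * α s))
        + 2 * (C * α k) := fun k hk => ciSup_le (hdelta k hk)
  have hsup0 : (⨆ j, ‖x 1 j - (n:ℝ)⁻¹ • ∑ i, x 1 i‖) ≤ 2 * R := by
    refine ciSup_le fun j => ?_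
    have h1 : ‖x 1 j‖ ≤ R := hRX _ (hx1 j)
    have h2 : ‖(n:ℝ)⁻¹ • ∑ i, x 1 i‖ ≤ R := by
      rw [norm_smul, Real.norm_eq_abs, abs_of_nonneg (by positivity : (0:ℝ) ≤ (n:ℝ)⁻¹)]
      have hs : ‖∑ i, x 1 i‖ ≤ (n:ℝ) * R := by
        calc ‖∑ i, x 1 i‖ ≤ ∑ i, ‖x 1 i‖ := norm_sum_le _ _
          _ ≤ ∑ _i : Fin n, R := Finset.sum_le_sum fun i _ => hRX _ (hx1 i)
          _ = (n:ℝ) * R := by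
              rw [Finset.sum_const, Finset.card_univ, Fintype.card_fin, nsmul_eq_mul]
      have h3 : (n:ℝ)⁻¹ * ‖∑ i, x 1 i‖ ≤ (n:ℝ)⁻¹ * ((n:ℝ) * R) :=
        mul_le_mul_of_nonneg_left hs (by positivity)
      have h4 : (n:ℝ)⁻¹ * ((n:ℝ) * R) = R := by field_simp
      linarith
    calc ‖x 1 j - (n:ℝ)⁻¹ • ∑ i, x 1 i‖
        ≤ ‖x 1 j‖ + ‖(n:ℝ)⁻¹ • ∑ i, x 1 i‖ := norm_sub_le _ _
      _ ≤ 2 * R := by linarith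
  -- apply the comparison criterion
  refine summable_of_sum_range_le
    (c := α 1 * (2*R) + ((n:ℝ)*θ*R) * ((A + (1-β*β)⁻¹)/2)
      + ((n:ℝ)*θ*C) * (β*(1-β)⁻¹*A) + (2*C)*A)
    (fun k => mul_nonneg (hαpos (k+1) (by omega)).le
      (Real.iSup_nonneg fun j => norm_nonneg _)) ?_
  intro K
  have hc0 : (0:ℝ) ≤ α 1 * (2*R) + ((n:ℝ)*θ*R) * ((A + (1-β*β)⁻¹)/2)
      + ((n:ℝ)*θ*C) * (β*(1-β)⁻¹*A) + (2*C)*A := by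
    have c1 : (0:ℝ) ≤ α 1 * (2*R) := by positivity
    have c2 : (0:ℝ) ≤ ((n:ℝ)*θ*R) * ((A + (1-β*β)⁻¹)/2) :=
      mul_nonneg hnθR0 (by linarith)
    have c3 : (0:ℝ) ≤ ((n:ℝ)*θ*C) * (β*(1-β)⁻¹*A) :=
      mul_nonneg hnθC0 (mul_nonneg hβinv hA0)
    have c4 : (0:ℝ) ≤ (2*C)*A := by positivity
    linarith
  rcases Nat.eq_zero_or_pos K with hK0 | hKpos
  · subst hK0
    simpa using hc0
  rw [Finset.range_eq_Ico, Finset.sum_eq_sum_Ico_succ_bot hKpos]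
  -- bound the k = 0 term
  have h00 : α (0+1) * (⨆ j, ‖x (0+1) j - (n:ℝ)⁻¹ • ∑ i, x (0+1) i‖) ≤ α 1 * (2*R) :=
    mul_le_mul_of_nonneg_left hsup0 hα1.le
  -- bound the rest
  have hrest : ∑ k ∈ Finset.Ico 1 K,
      α (k+1) * (⨆ j, ‖x (k+1) j - (n:ℝ)⁻¹ • ∑ i, x (k+1) i‖)
      ≤ ((n:ℝ)*θ*R) * ((A + (1-β*β)⁻¹)/2)
        + ((n:ℝ)*θ*C) * (β*(1-β)⁻¹*A) + (2*C)*A := by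
    have hterm : ∀ k ∈ Finset.Ico 1 K,
        α (k+1) * (⨆ j, ‖x (k+1) j - (n:ℝ)⁻¹ • ∑ i, x (k+1) i‖)
        ≤ ((n:ℝ)*θ*R) * (α (k+1) * β ^ k)
          + (∑ s ∈ Finset.Ico 1 k, ((n:ℝ)*θ*C) * (β ^ (k-s) * (α s * α (k+1))))
          + (2*C) * (α k * α (k+1)) := by
      intro k hkK
      rw [Finset.mem_Ico] at hkK
      have hk : 1 ≤ k := hkK.1
      have hα : 0 < α (k+1) := hαpos (k+1) (by omega)
      calc α (k+1) * (⨆ j, ‖x (k+1) j - (n:ℝ)⁻¹ • ∑ i, x (k+1) i‖)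
          ≤ α (k+1) * ((n:ℝ) * θ * R * β ^ k
            + (∑ s ∈ Finset.Ico 1 k, (n:ℝ) * θ * C * (β ^ (k-s) * α s))
            + 2 * (C * α k)) := mul_le_mul_of_nonneg_left (hsup k hk) hα.le
        _ = ((n:ℝ)*θ*R) * (α (k+1) * β ^ k)
          + α (k+1) * (∑ s ∈ Finset.Ico 1 k, (n:ℝ) * θ * C * (β ^ (k-s) * α s))
          + (2*C) * (α k * α (k+1)) := by ring
        _ = ((n:ℝ)*θ*R) * (α (k+1) * β ^ k)
          + (∑ s ∈ Finset.Ico 1 k, ((n:ℝ)*θ*C) * (β ^ (k-s) * (α s * α (k+1))))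
          + (2*C) * (α k * α (k+1)) := by
            congr 1
            congr 1
            rw [Finset.mul_sum]
            exact Finset.sum_congr rfl fun s _ => by ring
    have hsplit3 : ∑ k ∈ Finset.Ico 1 K,
        (((n:ℝ)*θ*R) * (α (k+1) * β ^ k)
          + (∑ s ∈ Finset.Ico 1 k, ((n:ℝ)*θ*C) * (β ^ (k-s) * (α s * α (k+1))))
          + (2*C) * (α k * α (k+1)))
        = (∑ k ∈ Finset.Ico 1 K, ((n:ℝ)*θ*R) * (α (k+1) * β ^ k))
          + (∑ k ∈ Finset.Ico 1 K, ∑ s ∈ Finset.Ico 1 k,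
              ((n:ℝ)*θ*C) * (β ^ (k-s) * (α s * α (k+1))))
          + ∑ k ∈ Finset.Ico 1 K, (2*C) * (α k * α (k+1)) := by
      rw [Finset.sum_add_distrib, Finset.sum_add_distrib]
    -- piece X
    have hX : ∑ k ∈ Finset.Ico 1 K, ((n:ℝ)*θ*R) * (α (k+1) * β ^ k)
        ≤ ((n:ℝ)*θ*R) * ((A + (1-β*β)⁻¹)/2) := by
      rw [← Finset.mul_sum]
      refine mul_le_mul_of_nonneg_left ?_ hnθR0
      have hterm2 : ∀ k ∈ Finset.Ico 1 K, α (k+1) * β ^ k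
          ≤ (α (k+1)^2 + (β*β)^k)/2 := by
        intro k _
        have hbb : (β*β)^k = β^k * β^k := mul_pow β β k
        nlinarith [sq_nonneg (α (k+1) - β^k)]
      calc ∑ k ∈ Finset.Ico 1 K, α (k+1) * β ^ k
          ≤ ∑ k ∈ Finset.Ico 1 K, (α (k+1)^2 + (β*β)^k)/2 := Finset.sum_le_sum hterm2
        _ = ((∑ k ∈ Finset.Ico 1 K, α (k+1)^2) + ∑ k ∈ Finset.Ico 1 K, (β*β)^k)/2 := by
            rw [← Finset.sum_add_distrib, Finset.sum_div]
        _ ≤ (A + (1-β*β)⁻¹)/2 := by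
            have := hApart2 K
            have := hgeo2 K
            linarith
    -- piece Y
    have hY : ∑ k ∈ Finset.Ico 1 K, ∑ s ∈ Finset.Ico 1 k,
        ((n:ℝ)*θ*C) * (β ^ (k-s) * (α s * α (k+1)))
        ≤ ((n:ℝ)*θ*C) * (β*(1-β)⁻¹*A) := by
      have hpull : ∑ k ∈ Finset.Ico 1 K, ∑ s ∈ Finset.Ico 1 k,
          ((n:ℝ)*θ*C) * (β ^ (k-s) * (α s * α (k+1)))
          = ((n:ℝ)*θ*C) * ∑ k ∈ Finset.Ico 1 K, ∑ s ∈ Finset.Ico 1 k,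
              β ^ (k-s) * (α s * α (k+1)) := by
        rw [Finset.mul_sum]
        exact Finset.sum_congr rfl fun k _ => by rw [Finset.mul_sum]
      rw [hpull]
      refine mul_le_mul_of_nonneg_left ?_ hnθC0
      have hsplitY : ∀ k ∈ Finset.Ico 1 K, ∑ s ∈ Finset.Ico 1 k,
          β ^ (k-s) * (α s * α (k+1))
          ≤ (∑ s ∈ Finset.Ico 1 k, β ^ (k-s) * (α s ^2/2))
            + (α (k+1)^2/2) * ∑ s ∈ Finset.Ico 1 k, β ^ (k-s) := by
        intro k hkK
        rw [Finset.mem_Ico] at hkK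
        rw [Finset.mul_sum, ← Finset.sum_add_distrib]
        refine Finset.sum_le_sum fun s hs => ?_
        rw [Finset.mem_Ico] at hs
        have h1 : α s * α (k+1) ≤ α s ^2/2 + α (k+1)^2/2 := by
          nlinarith [sq_nonneg (α s - α (k+1))]
        have h2 : (0:ℝ) ≤ β ^ (k-s) := by positivity
        nlinarith
      calc ∑ k ∈ Finset.Ico 1 K, ∑ s ∈ Finset.Ico 1 k, β ^ (k-s) * (α s * α (k+1))
          ≤ ∑ k ∈ Finset.Ico 1 K, ((∑ s ∈ Finset.Ico 1 k, β ^ (k-s) * (α s ^2/2))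
            + (α (k+1)^2/2) * ∑ s ∈ Finset.Ico 1 k, β ^ (k-s)) :=
            Finset.sum_le_sum hsplitY
        _ = (∑ k ∈ Finset.Ico 1 K, ∑ s ∈ Finset.Ico 1 k, β ^ (k-s) * (α s ^2/2))
            + ∑ k ∈ Finset.Ico 1 K, (α (k+1)^2/2) * ∑ s ∈ Finset.Ico 1 k, β ^ (k-s) :=
            Finset.sum_add_distrib
        _ ≤ β*(1-β)⁻¹*(A/2) + β*(1-β)⁻¹*(A/2) := by
            have hY1 : ∑ k ∈ Finset.Ico 1 K, ∑ s ∈ Finset.Ico 1 k, β ^ (k-s) * (α s ^2/2)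
                ≤ β*(1-β)⁻¹*(A/2) := by
              refine conv_swap_le hβ0.le hβ1 (fun s => α s ^2/2)
                (fun s => by positivity) (A/2) ?_ K
              intro K'
              rw [← Finset.sum_div]
              have := hApart1 K'
              linarith
            have hY2 : ∑ k ∈ Finset.Ico 1 K, (α (k+1)^2/2) * ∑ s ∈ Finset.Ico 1 k, β ^ (k-s)
                ≤ β*(1-β)⁻¹*(A/2) := by
              have hterm3 : ∀ k ∈ Finset.Ico 1 K,
                  (α (k+1)^2/2) * ∑ s ∈ Finset.Ico 1 k, β ^ (k-s)
                  ≤ (β*(1-β)⁻¹) * (α (k+1)^2/2) := by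
                intro k _
                rw [mul_comm]
                exact mul_le_mul_of_nonneg_right (geo_rev_le hβ0.le hβ1 k) (by positivity)
              calc ∑ k ∈ Finset.Ico 1 K, (α (k+1)^2/2) * ∑ s ∈ Finset.Ico 1 k, β ^ (k-s)
                  ≤ ∑ k ∈ Finset.Ico 1 K, (β*(1-β)⁻¹) * (α (k+1)^2/2) :=
                    Finset.sum_le_sum hterm3
                _ = (β*(1-β)⁻¹) * ((∑ k ∈ Finset.Ico 1 K, α (k+1)^2)/2) := by
                    rw [← Finset.mul_sum, Finset.sum_div]
                _ ≤ β*(1-β)⁻¹*(A/2) := by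
                    refine mul_le_mul_of_nonneg_left ?_ hβinv
                    have := hApart2 K
                    linarith
            linarith
        _ = β*(1-β)⁻¹*A := by ring
    -- piece Z
    have hZ : ∑ k ∈ Finset.Ico 1 K, (2*C) * (α k * α (k+1)) ≤ (2*C)*A := by
      rw [← Finset.mul_sum]
      refine mul_le_mul_of_nonneg_left ?_ (by positivity)
      have hterm4 : ∀ k ∈ Finset.Ico 1 K, α k * α (k+1) ≤ α k ^ 2 := by
        intro k hkK
        rw [Finset.mem_Ico] at hkK
        have := hαmono k hkK.1
        have := hαpos k hkK.1
        nlinarith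
      calc ∑ k ∈ Finset.Ico 1 K, α k * α (k+1)
          ≤ ∑ k ∈ Finset.Ico 1 K, α k ^ 2 := Finset.sum_le_sum hterm4
        _ ≤ A := hApart1 K
    calc ∑ k ∈ Finset.Ico 1 K,
        α (k+1) * (⨆ j, ‖x (k+1) j - (n:ℝ)⁻¹ • ∑ i, x (k+1) i‖)
        ≤ ∑ k ∈ Finset.Ico 1 K,
          (((n:ℝ)*θ*R) * (α (k+1) * β ^ k)
          + (∑ s ∈ Finset.Ico 1 k, ((n:ℝ)*θ*C) * (β ^ (k-s) * (α s * α (k+1))))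
          + (2*C) * (α k * α (k+1))) := Finset.sum_le_sum hterm
      _ ≤ ((n:ℝ)*θ*R) * ((A + (1-β*β)⁻¹)/2)
          + ((n:ℝ)*θ*C) * (β*(1-β)⁻¹*A) + (2*C)*A := by
          rw [hsplit3]
          exact add_le_add (add_le_add hX hY) hZ
  linarith
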